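/- Let α, β ∈ CBV*[0,1] and v, w ∈ CBV[0,1] satisfy α[1] = β[1] = 0 (where 1 is the constant function) and v + w = 1 pointwise. Define F₁(x) = α[x]v + β[x]w. Then for every n ≥ 0, ‖F₁^{n+2}‖ ≤ ‖α - β‖ · |α[v] - β[v]|ⁿ · ‖α[v]v + β[v]w‖_{BV}; in particular the spectral radius satisfies r(F₁) ≤ |α[v] - β[v]|. -/

import Mathlib

open Set

/-- `x` is a continuous function of bounded variation on `[0,1]`. -/
def IsCBV (x : ℝ → ℝ) : Prop :=
  ContinuousOn x (Set.Icc 0 1) ∧ BoundedVariationOn x (Set.Icc 0 1)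

/-- The BV-norm `‖x‖_{BV} = |x(0)| + Var_{[0,1]} x`. -/
noncomputable def bvNorm (x : ℝ → ℝ) : ℝ :=
  |x 0| + (eVariationOn x (Set.Icc 0 1)).toReal

lemma evar_comb_le (a b : ℝ) (f h : ℝ → ℝ) (s : Set ℝ) :
    eVariationOn (fun t => a * f t + b * h t) s ≤
      ENNReal.ofReal |a| * eVariationOn f s + ENNReal.ofReal |b| * eVariationOn h s := by
  refine iSup_le fun p => ?_
  calc ∑ i ∈ Finset.range p.1,
        edist ((fun t => a * f t + b * h t) (p.2.1 (i + 1)))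
          ((fun t => a * f t + b * h t) (p.2.1 i))
      ≤ ∑ i ∈ Finset.range p.1,
        (ENNReal.ofReal |a| * edist (f (p.2.1 (i + 1))) (f (p.2.1 i)) +
         ENNReal.ofReal |b| * edist (h (p.2.1 (i + 1))) (h (p.2.1 i))) := by
        refine Finset.sum_le_sum fun i _ => ?_
        simp only [edist_dist, Real.dist_eq]
        rw [← ENNReal.ofReal_mul (abs_nonneg a), ← ENNReal.ofReal_mul (abs_nonneg b),
          ← ENNReal.ofReal_add (by positivity) (by positivity)]
        refine ENNReal.ofReal_le_ofReal ?_
        have : a * f (p.2.1 (i+1)) + b * h (p.2.1 (i+1)) - (a * f (p.2.1 i) + b * h (p.2.1 i))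
            = a * (f (p.2.1 (i+1)) - f (p.2.1 i)) + b * (h (p.2.1 (i+1)) - h (p.2.1 i)) := by ring
        rw [this, ← abs_mul, ← abs_mul]
        exact abs_add_le _ _
    _ = ENNReal.ofReal |a| * ∑ i ∈ Finset.range p.1, edist (f (p.2.1 (i + 1))) (f (p.2.1 i)) +
        ENNReal.ofReal |b| * ∑ i ∈ Finset.range p.1, edist (h (p.2.1 (i + 1))) (h (p.2.1 i)) := by
        rw [Finset.sum_add_distrib, Finset.mul_sum, Finset.mul_sum]
    _ ≤ _ := by
        gcongr
        · exact eVariationOn.sum_le (f := f) p.2.2.1 p.2.2.2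
        · exact eVariationOn.sum_le (f := h) p.2.2.1 p.2.2.2

lemma bvNorm_nonneg (f : ℝ → ℝ) : 0 ≤ bvNorm f :=
  add_nonneg (abs_nonneg _) ENNReal.toReal_nonneg

lemma bvNorm_comb_le (a b : ℝ) {f h : ℝ → ℝ} (hf : BoundedVariationOn f (Set.Icc 0 1))
    (hh : BoundedVariationOn h (Set.Icc 0 1)) :
    bvNorm (fun t => a * f t + b * h t) ≤ |a| * bvNorm f + |b| * bvNorm h := by
  have h1 := evar_comb_le a b f h (Set.Icc 0 1)
  have hne : ENNReal.ofReal |a| * eVariationOn f (Set.Icc 0 1) +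
      ENNReal.ofReal |b| * eVariationOn h (Set.Icc 0 1) ≠ ⊤ :=
    ENNReal.add_ne_top.2 ⟨ENNReal.mul_ne_top ENNReal.ofReal_ne_top hf,
      ENNReal.mul_ne_top ENNReal.ofReal_ne_top hh⟩
  have h2 := ENNReal.toReal_mono hne h1
  rw [ENNReal.toReal_add (ENNReal.mul_ne_top ENNReal.ofReal_ne_top hf)
      (ENNReal.mul_ne_top ENNReal.ofReal_ne_top hh), ENNReal.toReal_mul, ENNReal.toReal_mul,
      ENNReal.toReal_ofReal (abs_nonneg a), ENNReal.toReal_ofReal (abs_nonneg b)] at h2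
  have h3 : |a * f 0 + b * h 0| ≤ |a| * |f 0| + |b| * |h 0| := by
    calc |a * f 0 + b * h 0| ≤ |a * f 0| + |b * h 0| := abs_add_le _ _
      _ = |a| * |f 0| + |b| * |h 0| := by rw [abs_mul, abs_mul]
  unfold bvNorm
  have := mul_nonneg (abs_nonneg a) ENNReal.toReal_nonneg (a := |a|)
    (b := (eVariationOn f (Set.Icc 0 1)).toReal)
  linarith [h2, h3]

lemma bvNorm_smul_le (c : ℝ) {g : ℝ → ℝ} (hg : BoundedVariationOn g (Set.Icc 0 1)) :
    bvNorm (fun t => c * g t) ≤ |c| * bvNorm g := by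
  have : (fun t : ℝ => c * g t) = fun t => c * g t + 0 * g t := by funext t; ring
  rw [this]
  have := bvNorm_comb_le c 0 hg hg
  simpa using this

lemma evar_comb_bv {a b : ℝ} {f h : ℝ → ℝ} (hf : BoundedVariationOn f (Set.Icc 0 1))
    (hh : BoundedVariationOn h (Set.Icc 0 1)) :
    BoundedVariationOn (fun t => a * f t + b * h t) (Set.Icc 0 1) := by
  refine ne_top_of_le_ne_top ?_ (evar_comb_le a b f h (Set.Icc 0 1))
  exact ENNReal.add_ne_top.2 ⟨ENNReal.mul_ne_top ENNReal.ofReal_ne_top hf,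
    ENNReal.mul_ne_top ENNReal.ofReal_ne_top hh⟩

theorem stmt_15 (α β : (ℝ → ℝ) →ₗ[ℝ] ℝ) (v w : ℝ → ℝ)
    (hv : IsCBV v) (hw : IsCBV w)
    (hα1 : α (fun _ => 1) = 0) (hβ1 : β (fun _ => 1) = 0)
    (hvw : ∀ t : ℝ, v t + w t = 1)
    (A B D : ℝ)
    (hα : ∀ x, IsCBV x → |α x| ≤ A * bvNorm x)
    (hβ : ∀ x, IsCBV x → |β x| ≤ B * bvNorm x)
    (hαβ : ∀ x, IsCBV x → |α x - β x| ≤ D * bvNorm x) :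
    (∀ (n : ℕ) (x : ℝ → ℝ), IsCBV x →
      bvNorm ((fun y : ℝ → ℝ => fun t => α y * v t + β y * w t)^[n + 2] x) ≤
        D * |α v - β v| ^ n * bvNorm (fun t => α v * v t + β v * w t) * bvNorm x) ∧
    ∀ ρ : ℝ, |α v - β v| < ρ → ∃ C : ℝ, ∀ (n : ℕ) (x : ℝ → ℝ), IsCBV x →
      bvNorm ((fun y : ℝ → ℝ => fun t => α y * v t + β y * w t)^[n] x) ≤
        C * ρ ^ n * bvNorm x := by
  set F : (ℝ → ℝ) → (ℝ → ℝ) := fun y : ℝ → ℝ => fun t => α y * v t + β y * w t with hF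
  set g : ℝ → ℝ := fun t => α v * v t + β v * w t with hg
  -- linearity helper
  have happ : ∀ (γ : (ℝ → ℝ) →ₗ[ℝ] ℝ) (a b : ℝ) (f h : ℝ → ℝ),
      γ (fun t => a * f t + b * h t) = a * γ f + b * γ h := by
    intro γ a b f h
    have : (fun t => a * f t + b * h t) = a • f + b • h := by
      funext t; simp [Pi.add_apply, Pi.smul_apply, smul_eq_mul]
    rw [this, map_add, map_smul, map_smul, smul_eq_mul, smul_eq_mul]
  have hwv : w = (fun _ : ℝ => (1 : ℝ)) - v := by
    funext t
    have := hvw t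
    simp only [Pi.sub_apply]
    linarith
  have hαw : α w = -α v := by rw [hwv, map_sub, hα1]; ring
  have hβw : β w = -β v := by rw [hwv, map_sub, hβ1]; ring
  -- the iterate formula
  have hiter : ∀ (n : ℕ) (x : ℝ → ℝ),
      F^[n + 2] x = fun t => ((α x - β x) * (α v - β v) ^ n) * g t := by
    intro n
    induction n with
    | zero =>
      intro x
      have h2 : F^[2] x = F (F x) := by
        rw [show (2 : ℕ) = 1 + 1 from rfl, Function.iterate_succ_apply', Function.iterate_one]
      rw [h2]
      have hαFx : α (F x) = (α x - β x) * α v := by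
        rw [hF]; simp only []; rw [happ α (α x) (β x) v w, hαw]; ring
      have hβFx : β (F x) = (α x - β x) * β v := by
        rw [hF]; simp only []; rw [happ β (α x) (β x) v w, hβw]; ring
      funext t
      simp only [hF, hg]
      rw [happ α (α x) (β x) v w, happ β (α x) (β x) v w, hαw, hβw]
      ring
    | succ n ih =>
      intro x
      have h2 : F^[n + 1 + 2] x = F (F^[n + 2] x) := by
        rw [show n + 1 + 2 = (n + 2) + 1 from by ring, Function.iterate_succ_apply']
      rw [h2, ih x]
      set c : ℝ := (α x - β x) * (α v - β v) ^ n with hc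
      have hcg : (fun t => c * g t) = fun t => (c * α v) * v t + (c * β v) * w t := by
        funext t; simp only [hg]; ring
      have hαc : α (fun t => c * g t) = c * (α v - β v) * α v := by
        rw [hcg, happ α (c * α v) (c * β v) v w, hαw]; ring
      have hβc : β (fun t => c * g t) = c * (α v - β v) * β v := by
        rw [hcg, happ β (c * α v) (c * β v) v w, hβw]; ring
      funext t
      simp only [hF]; rw [hαc, hβc]; simp only [hg]
      ring
  have hgbv : BoundedVariationOn g (Set.Icc 0 1) := evar_comb_bv hv.2 hw.2
  -- First part
  have part1 : ∀ (n : ℕ) (x : ℝ → ℝ), IsCBV x →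
      bvNorm (F^[n + 2] x) ≤ D * |α v - β v| ^ n * bvNorm g * bvNorm x := by
    intro n x hx
    rw [hiter n x]
    calc bvNorm (fun t => ((α x - β x) * (α v - β v) ^ n) * g t)
        ≤ |(α x - β x) * (α v - β v) ^ n| * bvNorm g := bvNorm_smul_le _ hgbv
      _ = |α x - β x| * |α v - β v| ^ n * bvNorm g := by
          rw [abs_mul, abs_pow]
      _ = |α x - β x| * (|α v - β v| ^ n * bvNorm g) := by ring
      _ ≤ (D * bvNorm x) * (|α v - β v| ^ n * bvNorm g) :=
          mul_le_mul_of_nonneg_right (hαβ x hx)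
            (mul_nonneg (by positivity) (bvNorm_nonneg g))
      _ = D * |α v - β v| ^ n * bvNorm g * bvNorm x := by ring
  refine ⟨part1, ?_⟩
  -- Second part
  intro ρ hρ
  have hρpos : 0 < ρ := lt_of_le_of_lt (abs_nonneg _) hρ
  have hD : 0 ≤ D := by
    have hc : IsCBV (fun _ : ℝ => (1 : ℝ)) :=
      ⟨continuousOn_const, by
        unfold BoundedVariationOn
        rw [eVariationOn.constant_on (by
          intro x hx y hy
          obtain ⟨x', -, rfl⟩ := hx
          obtain ⟨y', -, rfl⟩ := hy
          rfl)]
        exact ENNReal.zero_ne_top⟩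
    have := hαβ (fun _ => 1) hc
    rw [hα1, hβ1] at this
    simp only [sub_zero, abs_zero] at this
    have hb : bvNorm (fun _ : ℝ => (1 : ℝ)) = 1 := by
      unfold bvNorm
      rw [eVariationOn.constant_on (by
        intro x hx y hy
        obtain ⟨x', -, rfl⟩ := hx
        obtain ⟨y', -, rfl⟩ := hy
        rfl)]
      norm_num
    rw [hb] at this
    linarith
  set K1 : ℝ := A * bvNorm v + B * bvNorm w with hK1
  refine ⟨max (max 1 (K1 / ρ)) (D * bvNorm g / ρ ^ 2), ?_⟩
  intro n x hx
  match n with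
  | 0 =>
    simp only [Function.iterate_zero, id_eq, pow_zero, mul_one]
    have h1 : (1 : ℝ) ≤ max (max 1 (K1 / ρ)) (D * bvNorm g / ρ ^ 2) :=
      le_trans (le_max_left _ _) (le_max_left _ _)
    nlinarith [bvNorm_nonneg x]
  | 1 =>
    rw [Function.iterate_one]
    have hFx : bvNorm (F x) ≤ |α x| * bvNorm v + |β x| * bvNorm w :=
      bvNorm_comb_le _ _ hv.2 hw.2
    have h1 : |α x| * bvNorm v ≤ A * bvNorm x * bvNorm v :=
      mul_le_mul_of_nonneg_right (hα x hx) (bvNorm_nonneg v)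
    have h2 : |β x| * bvNorm w ≤ B * bvNorm x * bvNorm w :=
      mul_le_mul_of_nonneg_right (hβ x hx) (bvNorm_nonneg w)
    have hK : bvNorm (F x) ≤ K1 * bvNorm x := by rw [hK1]; nlinarith
    have hC : K1 / ρ ≤ max (max 1 (K1 / ρ)) (D * bvNorm g / ρ ^ 2) :=
      le_trans (le_max_right _ _) (le_max_left _ _)
    calc bvNorm (F x) ≤ K1 * bvNorm x := hK
      _ = (K1 / ρ) * ρ ^ 1 * bvNorm x := by field_simp
      _ ≤ max (max 1 (K1 / ρ)) (D * bvNorm g / ρ ^ 2) * ρ ^ 1 * bvNorm x := by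
          have : (0:ℝ) ≤ ρ ^ 1 * bvNorm x := mul_nonneg (by positivity) (bvNorm_nonneg x)
          nlinarith [bvNorm_nonneg x]
  | (m + 2) =>
    have h1 := part1 m x hx
    have hpow : |α v - β v| ^ m ≤ ρ ^ m := pow_le_pow_left₀ (abs_nonneg _) hρ.le m
    have hC : D * bvNorm g / ρ ^ 2 ≤ max (max 1 (K1 / ρ)) (D * bvNorm g / ρ ^ 2) :=
      le_max_right _ _
    calc bvNorm (F^[m + 2] x) ≤ D * |α v - β v| ^ m * bvNorm g * bvNorm x := h1
      _ ≤ D * ρ ^ m * bvNorm g * bvNorm x := by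
          have hGX : 0 ≤ bvNorm g * bvNorm x := mul_nonneg (bvNorm_nonneg g) (bvNorm_nonneg x)
          nlinarith [mul_le_mul_of_nonneg_left hpow hD]
      _ = (D * bvNorm g / ρ ^ 2) * ρ ^ (m + 2) * bvNorm x := by
          field_simp
          ring
      _ ≤ max (max 1 (K1 / ρ)) (D * bvNorm g / ρ ^ 2) * ρ ^ (m + 2) * bvNorm x := by
          have : (0:ℝ) ≤ ρ ^ (m + 2) * bvNorm x := mul_nonneg (by positivity) (bvNorm_nonneg x)
          nlinarith [bvNorm_nonneg x]
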